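/- arXiv:1805.07803 — 6 statements merged into one kernel-verified Lean document; each statement's English description precedes it below -/
import Mathlib

section
/- For the Bernoulli–Laplace chain (X_t), with f_2(x) = 1 - 2(2n-1)x/n² + 2(2n-1)x(x-1)/(n²(n-1)) an eigenfunction with eigenvalue f_2(k), the conditional variance satisfies Var(X_t | X_0) = n²/(4(2n-1)) + n²(n-1)/(2(2n-1)) · f_2(k)^t f_2(X_0) - (n²/4)(1 - 2k/n)^{2t}(1 - 2X_0/n)². -/
/-- For the Bernoulli–Laplace chain with eigenfunctions `f₁(x) = 1 - 2x/n` (eigenvalue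
`1 - 2k/n`) and `f₂(x) = 1 - 2(2n-1)x/n² + 2(2n-1)x(x-1)/(n²(n-1))` (eigenvalue `f₂(k)`), the
conditional variance satisfies
`Var(X_t|X_0) = n²/(4(2n-1)) + n²(n-1)/(2(2n-1)) f₂(k)^t f₂(X_0)
  - (n²/4)(1-2k/n)^{2t}(1-2X_0/n)²`. -/
theorem bernoulliLaplace_conditional_variance (n k : ℕ) (hn : 2 ≤ n)
    (f₂ : ℝ → ℝ)
    (hf₂def : ∀ x : ℝ, f₂ x = 1 - 2 * (2 * (n : ℝ) - 1) * x / n ^ 2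
      + 2 * (2 * (n : ℝ) - 1) * x * (x - 1) / ((n : ℝ) ^ 2 * ((n : ℝ) - 1)))
    (P : Matrix (Fin (n + 1)) (Fin (n + 1)) ℝ)
    (hP0 : ∀ x y, 0 ≤ P x y) (hP1 : ∀ x, ∑ y, P x y = 1)
    (heig₁ : P.mulVec (fun i : Fin (n + 1) => 1 - 2 * (i : ℝ) / n)
      = (1 - 2 * (k : ℝ) / n) • (fun i : Fin (n + 1) => 1 - 2 * (i : ℝ) / n))
    (heig₂ : P.mulVec (fun i : Fin (n + 1) => f₂ (i : ℝ)) = f₂ (k : ℝ) • (fun i : Fin (n + 1) => f₂ (i : ℝ))) :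
    ∀ (t : ℕ) (x₀ : Fin (n + 1)),
      (P ^ t).mulVec (fun i : Fin (n + 1) => (i : ℝ) ^ 2) x₀ - ((P ^ t).mulVec (fun i : Fin (n + 1) => (i : ℝ)) x₀) ^ 2
        = (n : ℝ) ^ 2 / (4 * (2 * (n : ℝ) - 1))
          + (n : ℝ) ^ 2 * ((n : ℝ) - 1) / (2 * (2 * (n : ℝ) - 1))
            * f₂ (k : ℝ) ^ t * f₂ (x₀ : ℝ)
          - (n : ℝ) ^ 2 / 4 * (1 - 2 * (k : ℝ) / n) ^ (2 * t)
            * (1 - 2 * (x₀ : ℝ) / n) ^ 2 := by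
  have hn0 : (n : ℝ) ≠ 0 := by positivity
  have hn2 : (2 : ℝ) ≤ (n : ℝ) := by exact_mod_cast hn
  have hn1 : (n : ℝ) - 1 ≠ 0 := by nlinarith
  have h2n1 : 2 * (n : ℝ) - 1 ≠ 0 := by nlinarith
  -- row sums of powers
  have hrow : ∀ t : ℕ, ∀ x, ∑ y, (P ^ t) x y = 1 := by
    intro t
    induction t with
    | zero => intro x; simp [Matrix.one_apply]
    | succ t ih =>
        intro x
        rw [pow_succ]
        simp only [Matrix.mul_apply]
        rw [Finset.sum_comm]
        calc ∑ z, ∑ y, (P ^ t) x z * P z y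
            = ∑ z, (P ^ t) x z * ∑ y, P z y := by
              simp [Finset.mul_sum]
          _ = 1 := by simp [hP1, ih x]
  -- eigenvector propagation
  have heig : ∀ (v : Fin (n + 1) → ℝ) (lam : ℝ), P.mulVec v = lam • v →
      ∀ t : ℕ, (P ^ t).mulVec v = lam ^ t • v := by
    intro v lam h t
    induction t with
    | zero => simp
    | succ t ih =>
        rw [pow_succ, ← Matrix.mulVec_mulVec, h, Matrix.mulVec_smul, ih, smul_smul,
          ← pow_succ']
  intro t x₀
  set A := P ^ t with hA
  have hA1 : ∑ y, A x₀ y = 1 := hrow t x₀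
  have hAv1 : ∑ y, A x₀ y * (1 - 2 * (y : ℝ) / n)
      = (1 - 2 * (k : ℝ) / n) ^ t * (1 - 2 * (x₀ : ℝ) / n) := by
    have := congrFun (heig _ _ heig₁ t) x₀
    simpa [Matrix.mulVec, dotProduct] using this
  have hAv2 : ∑ y, A x₀ y * f₂ (y : ℝ) = f₂ (k : ℝ) ^ t * f₂ (x₀ : ℝ) := by
    have := congrFun (heig _ _ heig₂ t) x₀
    simpa [Matrix.mulVec, dotProduct] using this
  have hE : ∑ y, A x₀ y * (y : ℝ)
      = (n : ℝ) / 2 - (n : ℝ) / 2 * ((1 - 2 * (k : ℝ) / n) ^ t * (1 - 2 * (x₀ : ℝ) / n)) := by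
    have key : ∀ y : Fin (n + 1), A x₀ y * (y : ℝ)
        = (n : ℝ) / 2 * A x₀ y - (n : ℝ) / 2 * (A x₀ y * (1 - 2 * (y : ℝ) / n)) := by
      intro y
      field_simp
      ring
    calc ∑ y, A x₀ y * (y : ℝ)
        = ∑ y, ((n : ℝ) / 2 * A x₀ y - (n : ℝ) / 2 * (A x₀ y * (1 - 2 * (y : ℝ) / n))) :=
          Finset.sum_congr rfl fun y _ => key y
      _ = (n : ℝ) / 2 * ∑ y, A x₀ y
            - (n : ℝ) / 2 * ∑ y, A x₀ y * (1 - 2 * (y : ℝ) / n) := by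
          rw [Finset.sum_sub_distrib, Finset.mul_sum, Finset.mul_sum]
      _ = _ := by rw [hA1, hAv1]; ring
  have hE2 : ∑ y, A x₀ y * (y : ℝ) ^ 2
      = (n : ℝ) ^ 2 / 4 * (1 / (2 * (n : ℝ) - 1) - 1)
        + (n : ℝ) ^ 2 * (2 * (n : ℝ) - 2) / (4 * (2 * (n : ℝ) - 1)) * (f₂ (k : ℝ) ^ t * f₂ (x₀ : ℝ))
        + (n : ℝ) * ∑ y, A x₀ y * (y : ℝ) := by
    have key : ∀ y : Fin (n + 1), A x₀ y * (y : ℝ) ^ 2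
        = (n : ℝ) ^ 2 / 4 * (1 / (2 * (n : ℝ) - 1) - 1) * A x₀ y
          + (n : ℝ) ^ 2 * (2 * (n : ℝ) - 2) / (4 * (2 * (n : ℝ) - 1)) * (A x₀ y * f₂ (y : ℝ))
          + (n : ℝ) * (A x₀ y * (y : ℝ)) := by
      intro y
      rw [hf₂def]
      field_simp
      ring_nf
      have hinv : (-1 + (n : ℝ) * 2)⁻¹ * (-1 + (n : ℝ) * 2) = 1 :=
        inv_mul_cancel₀ (by contrapose! h2n1; linarith)
      linear_combination (4 * A x₀ y * (y : ℝ) * n - 4 * A x₀ y * (y : ℝ) ^ 2 - A x₀ y * (n : ℝ) ^ 2) * hinv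
    calc ∑ y, A x₀ y * (y : ℝ) ^ 2
        = ∑ y, ((n : ℝ) ^ 2 / 4 * (1 / (2 * (n : ℝ) - 1) - 1) * A x₀ y
          + (n : ℝ) ^ 2 * (2 * (n : ℝ) - 2) / (4 * (2 * (n : ℝ) - 1)) * (A x₀ y * f₂ (y : ℝ))
          + (n : ℝ) * (A x₀ y * (y : ℝ))) := Finset.sum_congr rfl fun y _ => key y
      _ = (n : ℝ) ^ 2 / 4 * (1 / (2 * (n : ℝ) - 1) - 1) * ∑ y, A x₀ y
          + (n : ℝ) ^ 2 * (2 * (n : ℝ) - 2) / (4 * (2 * (n : ℝ) - 1)) * ∑ y, A x₀ y * f₂ (y : ℝ)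
          + (n : ℝ) * ∑ y, A x₀ y * (y : ℝ) := by
          rw [Finset.sum_add_distrib, Finset.sum_add_distrib, Finset.mul_sum, Finset.mul_sum,
            Finset.mul_sum]
      _ = _ := by rw [hA1, hAv2]; ring
  have hgoal1 : A.mulVec (fun i : Fin (n + 1) => (i : ℝ) ^ 2) x₀ = ∑ y, A x₀ y * (y : ℝ) ^ 2 := by
    simp [Matrix.mulVec, dotProduct]
  have hgoal2 : A.mulVec (fun i : Fin (n + 1) => (i : ℝ)) x₀ = ∑ y, A x₀ y * (y : ℝ) := by
    simp [Matrix.mulVec, dotProduct]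
  rw [hgoal1, hgoal2, hE2, hE, pow_mul']
  set a := (1 - 2 * (k : ℝ) / n) ^ t with ha
  set b := f₂ (k : ℝ) ^ t with hb
  clear_value a b
  field_simp
  ring
end

section
/- For the Bernoulli–Laplace chain with 1 ≤ k ≤ n/2 and any t ≥ (n/(4k)) log n, the conditional mean and variance satisfy |E(X_t | X_0) - n/2| ≤ √n and Var(X_t | X_0) ≤ n. -/
set_option maxHeartbeats 1600000 in
/-- For the Bernoulli–Laplace chain with `1 ≤ k ≤ n/2`, whose conditional mean and variance are
given by the explicit eigenfunction formulas, for any `t ≥ (n/(4k)) log n` one has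
`|E(X_t|X_0) - n/2| ≤ √n` and `Var(X_t|X_0) ≤ n`. -/
theorem bernoulliLaplace_mean_var_bounds (n k t : ℕ) (hn : 2 ≤ n) (hk : 1 ≤ k)
    (hk2 : 2 * k ≤ n) (X₀ : ℝ) (hX₀ : 0 ≤ X₀ ∧ X₀ ≤ n)
    (f₂ : ℝ → ℝ)
    (hf₂def : ∀ x : ℝ, f₂ x = 1 - 2 * (2 * (n : ℝ) - 1) * x / n ^ 2
      + 2 * (2 * (n : ℝ) - 1) * x * (x - 1) / ((n : ℝ) ^ 2 * ((n : ℝ) - 1)))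
    (E V : ℝ)
    (hE : E = (n : ℝ) / 2 - (1 - 2 * (k : ℝ) / n) ^ t * ((n : ℝ) / 2 - X₀))
    (hV : V = (n : ℝ) ^ 2 / (4 * (2 * (n : ℝ) - 1))
      + (n : ℝ) ^ 2 * ((n : ℝ) - 1) / (2 * (2 * (n : ℝ) - 1)) * f₂ (k : ℝ) ^ t * f₂ X₀
      - (n : ℝ) ^ 2 / 4 * (1 - 2 * (k : ℝ) / n) ^ (2 * t) * (1 - 2 * X₀ / n) ^ 2)
    (ht : (n : ℝ) / (4 * k) * Real.log n ≤ t) :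
    |E - (n : ℝ) / 2| ≤ Real.sqrt n ∧ V ≤ n := by
  obtain ⟨hX0, hXn⟩ := hX₀
  have hn1 : (1:ℝ) < n := by exact_mod_cast (by omega : 1 < n)
  have hN : (0:ℝ) < n := by linarith
  have hK1 : (1:ℝ) ≤ k := by exact_mod_cast hk
  have hK0 : (0:ℝ) < k := by linarith
  have hKn : 2 * (k:ℝ) ≤ n := by exact_mod_cast hk2
  set N : ℝ := (n:ℝ) with hNdef
  set K : ℝ := (k:ℝ) with hKdef
  set r : ℝ := 1 - 2 * K / N with hr
  have hN1 : (0:ℝ) < N - 1 := by linarith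
  have h2N1 : (0:ℝ) < 2 * N - 1 := by linarith
  have hr0 : 0 ≤ r := by
    rw [hr]
    have : 2 * K / N ≤ 1 := by rw [div_le_one hN]; linarith
    linarith
  have hr1 : r ≤ 1 := by
    rw [hr]
    have : 0 ≤ 2 * K / N := by positivity
    linarith
  have hrexp : r ≤ Real.exp (-(2 * K / N)) := by
    have := Real.add_one_le_exp (-(2 * K / N))
    rw [hr]; linarith
  clear_value r
  -- mean bound
  have ht1 : 1 ≤ t := by
    rcases Nat.eq_zero_or_pos t with h0 | h; swap; · exact h
    exfalso
    have hpos : 0 < N / (4 * K) * Real.log N :=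
      mul_pos (div_pos hN (by linarith)) (Real.log_pos hn1)
    rw [h0] at ht; simp at ht; linarith
  have hsq : Real.sqrt N * Real.sqrt N = N := Real.mul_self_sqrt (le_of_lt hN)
  have hsqpos : 0 < Real.sqrt N := Real.sqrt_pos.mpr hN
  have hrt : r ^ t ≤ 1 / Real.sqrt N := by
    have h2 : r ^ t ≤ Real.exp (-(2 * K / N)) ^ t := pow_le_pow_left₀ hr0 hrexp t
    have h3 : Real.exp (-(2 * K / N)) ^ t = Real.exp (-(2 * K / N) * t) := by
      rw [← Real.exp_nat_mul]; ring_nf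
    have h4 : (1/2 : ℝ) * Real.log N ≤ 2 * K / N * t := by
      have := mul_le_mul_of_nonneg_left ht (by positivity : (0:ℝ) ≤ 2 * K / N)
      calc (1/2 : ℝ) * Real.log N = 2 * K / N * (N / (4 * K) * Real.log N) := by
            field_simp; ring
        _ ≤ 2 * K / N * t := this
    have h5 : Real.exp (-(2 * K / N) * t) ≤ Real.exp (-(1/2 * Real.log N)) := by
      apply Real.exp_le_exp.mpr; push_cast; linarith
    have h6 : Real.exp (-(1/2 * Real.log N)) = 1 / Real.sqrt N := by
      rw [Real.exp_neg]
      have : Real.exp (1/2 * Real.log N) = Real.sqrt N := by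
        rw [Real.sqrt_eq_rpow, Real.rpow_def_of_pos hN]; ring_nf
      rw [this, one_div]
    linarith
  have hNne : N ≠ 0 := ne_of_gt hN
  have hN1ne : N - 1 ≠ 0 := ne_of_gt hN1
  have h2N1ne : 2 * N - 1 ≠ 0 := ne_of_gt h2N1
  constructor
  · rw [hE]
    have heq : N / 2 - r ^ t * (N / 2 - X₀) - N / 2 = -(r ^ t * (N / 2 - X₀)) := by ring
    rw [heq, abs_neg, abs_mul, abs_of_nonneg (pow_nonneg hr0 t)]
    have habs2 : |N / 2 - X₀| ≤ N / 2 := abs_le.mpr ⟨by linarith, by linarith⟩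
    calc r ^ t * |N / 2 - X₀| ≤ (1 / Real.sqrt N) * (N / 2) :=
          mul_le_mul hrt habs2 (abs_nonneg _) (by positivity)

      _ ≤ Real.sqrt N := by
          rw [div_mul_eq_mul_div, one_mul, div_le_iff₀ hsqpos]; nlinarith
  · -- variance bound
    set a : ℝ := f₂ K with ha
    set b : ℝ := f₂ X₀ with hb
    have hDa : a = 1 - 2 * (2*N-1) * (K * (N - K)) / (N^2 * (N-1)) := by
      rw [ha, hf₂def]; field_simp [hNne, hN1ne]; ring
    have hDb : b = 1 - 2 * (2*N-1) * (X₀ * (N - X₀)) / (N^2 * (N-1)) := by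
      rw [hb, hf₂def]; field_simp [hNne, hN1ne]; ring
    clear_value a b
    have hKNK : 0 ≤ K * (N - K) := mul_nonneg (by linarith) (by linarith)
    have hXNX : 0 ≤ X₀ * (N - X₀) := mul_nonneg (by linarith) (by linarith)
    have hbub : b ≤ 1 := by
      rw [hDb]
      have : 0 ≤ 2 * (2*N-1) * (X₀ * (N - X₀)) / (N^2 * (N-1)) := by
        apply div_nonneg _ (by positivity); nlinarith
      linarith
    have hblb : -(1 / (2 * (N-1))) ≤ b := by
      have heq : b + 1 / (2 * (N-1)) = (2*N-1) * (N - 2*X₀)^2 / (2 * N^2 * (N-1)) := by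
        rw [hDb]; field_simp [hNne, hN1ne, h2N1ne]; ring
      have : 0 ≤ (2*N-1) * (N - 2*X₀)^2 / (2 * N^2 * (N-1)) := by
        apply div_nonneg _ (by positivity); positivity
      linarith [heq ▸ this]
    have halb : -(1 / (2 * (N-1))) ≤ a := by
      have heq : a + 1 / (2 * (N-1)) = (2*N-1) * (N - 2*K)^2 / (2 * N^2 * (N-1)) := by
        rw [hDa]; field_simp [hNne, hN1ne]; ring
      have : 0 ≤ (2*N-1) * (N - 2*K)^2 / (2 * N^2 * (N-1)) := by
        apply div_nonneg _ (by positivity); positivity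
      linarith
    have haub : a ≤ r^2 := by
      have heq : r^2 - a = 2 * (K * (N - K)) / (N^2 * (N-1)) := by
        rw [hDa, hr]; field_simp [hNne, hN1ne]; ring
      have : 0 ≤ 2 * (K * (N - K)) / (N^2 * (N-1)) := by
        apply div_nonneg _ (by positivity); linarith
      nlinarith [heq, this]
    have hhalf : 1 / (2 * (N-1)) ≤ 1 := by
      rw [div_le_one (by linarith)]; linarith
    have hAle : N^2 / (4 * (2*N-1)) ≤ N / 4 := by
      rw [div_le_div_iff₀ (by linarith) (by norm_num)]; nlinarith
    rw [hV]
    have hC3 : 0 ≤ N^2/4 * r^(2*t) * (1 - 2*X₀/N)^2 := mul_nonneg (mul_nonneg (by positivity) (pow_nonneg hr0 _)) (sq_nonneg _)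
    rcases le_or_gt 0 a with ha0 | ha0
    · rcases le_or_gt 0 b with hb0 | hb0
      · -- both nonneg
        have hat : a ^ t ≤ r ^ (2*t) := by
          calc a ^ t ≤ (r^2) ^ t := pow_le_pow_left₀ ha0 haub t
            _ = r ^ (2*t) := by rw [← pow_mul]
        have hid : N^2 * (N-1) / (2*(2*N-1)) * b - N^2/4 * (1 - 2*X₀/N)^2
            = -(N^2 / (4*(2*N-1))) := by
          rw [hDb]; field_simp [hNne, hN1ne, h2N1ne]; ring_nf; field_simp [show -1 + N*2 ≠ 0 by contrapose! h2N1ne; linarith]; ring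
        have hr2t0 : 0 ≤ r ^ (2*t) := pow_nonneg hr0 _
        have hr2t1 : r ^ (2*t) ≤ 1 := pow_le_one₀ hr0 hr1
        have hC2b : 0 ≤ N^2 * (N-1) / (2*(2*N-1)) * b := mul_nonneg (by positivity) hb0
        have step : N^2 * (N-1) / (2*(2*N-1)) * a^t * b
            ≤ N^2 * (N-1) / (2*(2*N-1)) * r^(2*t) * b := by
          have hC2 : 0 ≤ N^2 * (N-1) / (2*(2*N-1)) := by positivity
          have := mul_le_mul_of_nonneg_left hat hC2
          exact mul_le_mul_of_nonneg_right this hb0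
        nlinarith [mul_le_mul_of_nonneg_left hr2t1 (le_of_lt (by positivity : (0:ℝ) < N^2/(4*(2*N-1))))]
      · -- b negative
        have : N^2 * (N-1) / (2*(2*N-1)) * a^t * b ≤ 0 := by
          apply mul_nonpos_of_nonneg_of_nonpos _ (le_of_lt hb0)
          exact mul_nonneg (by positivity) (pow_nonneg ha0 t)
        nlinarith
    · -- a negative
      have hab : a^t * b ≤ 1 / (2 * (N-1)) := by
        have h1 : |a| ≤ 1 / (2 * (N-1)) := by
          rw [abs_of_neg ha0]; linarith
        have h2 : |b| ≤ 1 := by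
          rw [abs_le]; constructor <;> [linarith; exact hbub]
        calc a^t * b ≤ |a^t * b| := le_abs_self _
          _ = |a|^t * |b| := by rw [abs_mul, abs_pow]
          _ ≤ |a|^t * 1 := by
              apply mul_le_mul_of_nonneg_left h2 (pow_nonneg (abs_nonneg _) t)
          _ = |a|^t := mul_one _
          _ ≤ |a|^1 := pow_le_pow_of_le_one (abs_nonneg _) (le_trans h1 hhalf) ht1
          _ = |a| := pow_one _
          _ ≤ 1 / (2 * (N-1)) := h1
      have hmid : N^2 * (N-1) / (2*(2*N-1)) * a^t * b ≤ N^2 / (4*(2*N-1)) := by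
        have hC2 : 0 ≤ N^2 * (N-1) / (2*(2*N-1)) := by positivity
        calc N^2 * (N-1) / (2*(2*N-1)) * a^t * b
            = N^2 * (N-1) / (2*(2*N-1)) * (a^t * b) := by ring
          _ ≤ N^2 * (N-1) / (2*(2*N-1)) * (1 / (2*(N-1))) :=
              mul_le_mul_of_nonneg_left hab hC2
          _ = N^2 / (4*(2*N-1)) := by field_simp [hN1ne, h2N1ne]; ring
      have : N^2 / (4*(2*N-1)) + N^2 / (4*(2*N-1)) ≤ N := by
        rw [← add_div, div_le_iff₀ (by linarith)]; nlinarith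
      linarith
end

section
/- Let (M_t) be a martingale with M_t = (1 - 2X_t/n)/(1-2k/n)^t for a process (X_t) with values in {0,...,n}. Then for 0 ≤ t_1 ≤ t_2 and r > 0, P(max_{t₁ ≤ t ≤ t₂} |X_t - n/2| > r | X_0) ≤ (n²/(4r²)) (1-2k/n)^{-2(t_2 - t_1)} E((1 - 2X_{t_2}/n)² | X_0). -/
open MeasureTheory
open scoped NNReal ENNReal

/-- If `M_t = (1 - 2X_t/n)/(1 - 2k/n)^t` is a martingale for a process `(X_t)` with values in
`{0,…,n}`, then for `0 ≤ t₁ ≤ t₂` and `r > 0`, Doob's maximal inequality yields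
`P(max_{t₁ ≤ t ≤ t₂} |X_t - n/2| > r | X_0)
  ≤ (n²/(4r²)) (1 - 2k/n)^{-2(t₂-t₁)} E((1 - 2X_{t₂}/n)² | X_0)`. -/
theorem doob_maximal_bound {Ω : Type*} [m0 : MeasurableSpace Ω]
    (μ : Measure Ω) [IsProbabilityMeasure μ] (ℱ : Filtration ℕ m0)
    (n k : ℕ) (hk : 0 < k) (hkn : 2 * k < n)
    (X : ℕ → Ω → ℝ) (hXval : ∀ t ω, X t ω ∈ Set.Icc (0 : ℝ) n)
    (hM : Martingale (fun t ω => (1 - 2 * X t ω / n) / (1 - 2 * (k : ℝ) / n) ^ t) ℱ μ)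
    (t₁ t₂ : ℕ) (ht : t₁ ≤ t₂) (r : ℝ) (hr : 0 < r) :
    μ {ω | ∃ t, t₁ ≤ t ∧ t ≤ t₂ ∧ r < |X t ω - (n : ℝ) / 2|}
      ≤ ENNReal.ofReal ((n : ℝ) ^ 2 / (4 * r ^ 2)
          * (1 - 2 * (k : ℝ) / n) ^ (-(2 : ℤ) * (t₂ - t₁ : ℤ))
          * ∫ ω, (1 - 2 * X t₂ ω / n) ^ 2 ∂μ) := by
  have hn : (0 : ℝ) < n := by
    have : (0 : ℕ) < n := lt_of_le_of_lt (Nat.zero_le _) hkn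
    exact_mod_cast this
  set c : ℝ := 1 - 2 * (k : ℝ) / n with hcdef
  have hc0 : 0 < c := by
    have h2k : (2 * k : ℝ) < n := by exact_mod_cast hkn
    have : 2 * (k : ℝ) / n < 1 := by
      rw [div_lt_one hn]; linarith
    simp only [hcdef]; linarith
  have hc1 : c ≤ 1 := by
    have : 0 ≤ 2 * (k : ℝ) / n := by positivity
    simp only [hcdef]; linarith
  have hcpow : ∀ t : ℕ, (0 : ℝ) < c ^ t := fun t => pow_pos hc0 t
  set M : ℕ → Ω → ℝ := fun t ω => (1 - 2 * X t ω / n) / c ^ t with hMdef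
  -- bound on the numerator
  have hnum : ∀ t ω, |1 - 2 * X t ω / n| ≤ 1 := by
    intro t ω
    obtain ⟨h0, h1⟩ := hXval t ω
    rw [abs_le]
    constructor
    · have : 2 * X t ω / n ≤ 2 := by
        rw [div_le_iff₀ hn]; nlinarith
      linarith
    · have : 0 ≤ 2 * X t ω / n := by positivity
      linarith
  have hbound : ∀ t ω, |M t ω| ≤ (c ^ t)⁻¹ := by
    intro t ω
    simp only [hMdef, abs_div, abs_of_pos (hcpow t)]
    rw [div_le_iff₀ (hcpow t), inv_mul_cancel₀ (hcpow t).ne']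
    exact hnum t ω
  have hMint : ∀ t, Integrable (M t) μ := fun t => hM.integrable t
  have hMmeas : ∀ t, AEStronglyMeasurable (M t) μ := fun t =>
    ((hM.stronglyAdapted t).mono (ℱ.le t)).aestronglyMeasurable
  have hsq_int : ∀ s t, Integrable (fun ω => M s ω * M t ω) μ := fun s t =>
    (hMint t).bdd_mul (hMmeas s) (ae_of_all _ fun ω => by
      simpa using hbound s ω)
  set S : ℕ → Ω → ℝ := fun t ω => M t ω * M t ω with hSdef
  have hSadp : StronglyAdapted ℱ S := fun t => (hM.stronglyAdapted t).mul (hM.stronglyAdapted t)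
  have hSint : ∀ t, Integrable (S t) μ := fun t => hsq_int t t
  -- S is a submartingale
  have hsub : Submartingale S ℱ μ := by
    refine submartingale_of_condExp_sub_nonneg_nat hSadp hSint ?_
    intro i
    set D : Ω → ℝ := fun ω => M (i + 1) ω - M i ω with hDdef
    have hDint : Integrable D μ := (hMint (i + 1)).sub (hMint i)
    have hg1_int : Integrable (fun ω => D ω * D ω) μ := by
      have heq : (fun ω => D ω * D ω) = fun ω =>
          M (i+1) ω * M (i+1) ω - M (i+1) ω * M i ω
            - (M i ω * M (i+1) ω - M i ω * M i ω) := by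
        funext ω; simp only [hDdef]; ring
      rw [heq]
      exact ((hsq_int _ _).sub (hsq_int _ _)).sub ((hsq_int _ _).sub (hsq_int _ _))
    have hg2_int : Integrable (fun ω => (2 * M i ω) * D ω) μ := by
      have heq : (fun ω => (2 * M i ω) * D ω) = fun ω =>
          2 * (M i ω * M (i+1) ω) - 2 * (M i ω * M i ω) := by
        funext ω; simp only [hDdef]; ring
      rw [heq]
      exact ((hsq_int i (i+1)).const_mul 2).sub ((hsq_int i i).const_mul 2)
    have hsplit : S (i + 1) - S i =
        (fun ω => D ω * D ω) + fun ω => (2 * M i ω) * D ω := by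
      funext ω
      simp only [hSdef, hDdef, Pi.sub_apply, Pi.add_apply]
      ring
    have hD0 : μ[D | ℱ i] =ᵐ[μ] 0 := by
      have h1 : μ[D | ℱ i] =ᵐ[μ] μ[M (i+1) | ℱ i] - μ[M i | ℱ i] :=
        condExp_sub (hMint (i+1)) (hMint i) _
      have h2 : μ[M (i+1) | ℱ i] =ᵐ[μ] M i := hM.condExp_ae_eq (Nat.le_succ i)
      have h3 : μ[M i | ℱ i] =ᵐ[μ] M i := hM.condExp_ae_eq le_rfl
      filter_upwards [h1, h2, h3] with ω e1 e2 e3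
      simp only [Pi.sub_apply] at e1
      simp [e1, e2, e3]
    have hpull : μ[fun ω => (2 * M i ω) * D ω | ℱ i] =ᵐ[μ]
        (fun ω => 2 * M i ω) * μ[D | ℱ i] :=
      condExp_mul_of_stronglyMeasurable_left
        (stronglyMeasurable_const.mul (hM.stronglyAdapted i)) hg2_int hDint
    have hg1_nonneg : (0 : Ω → ℝ) ≤ᵐ[μ] μ[fun ω => D ω * D ω | ℱ i] :=
      condExp_nonneg (ae_of_all _ fun ω => mul_self_nonneg _)
    have hadd : μ[S (i+1) - S i | ℱ i] =ᵐ[μ]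
        μ[fun ω => D ω * D ω | ℱ i] + μ[fun ω => (2 * M i ω) * D ω | ℱ i] := by
      rw [hsplit]
      exact condExp_add hg1_int hg2_int _
    filter_upwards [hadd, hpull, hD0, hg1_nonneg] with ω e1 e2 e3 e4
    simp only [Pi.add_apply, Pi.mul_apply, Pi.zero_apply] at *
    rw [e1, e2, e3]
    simpa using e4
  -- the threshold
  set e : ℝ := (2 * r / n) ^ 2 / c ^ (2 * t₁) with hedef
  have he : 0 < e := by positivity
  have hcoe : ((e.toNNReal : ℝ≥0) : ℝ) = e := Real.coe_toNNReal e he.le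
  set B : Set Ω := {ω | ((e.toNNReal : ℝ≥0) : ℝ) ≤
      (Finset.range (t₂ + 1)).sup' Finset.nonempty_range_add_one fun j => S j ω} with hBdef
  have hAB : {ω | ∃ t, t₁ ≤ t ∧ t ≤ t₂ ∧ r < |X t ω - (n : ℝ) / 2|} ⊆ B := by
    intro ω hω
    obtain ⟨t, ht1, ht2, hrt⟩ := hω
    have habs : |1 - 2 * X t ω / n| = 2 * |X t ω - (n : ℝ) / 2| / n := by
      rw [show (1 : ℝ) - 2 * X t ω / n = -(2 * (X t ω - n / 2) / n) by
        field_simp; ring]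
      rw [abs_neg, abs_div, abs_of_pos hn, abs_mul]
      norm_num
    have h1 : (2 * r / n) ^ 2 ≤ (1 - 2 * X t ω / n) ^ 2 := by
      have hle : 2 * r / n ≤ |1 - 2 * X t ω / n| := by
        rw [habs]
        rw [div_le_div_iff_of_pos_right hn]
        nlinarith
      calc (2 * r / n) ^ 2 ≤ |1 - 2 * X t ω / n| ^ 2 :=
            pow_le_pow_left₀ (by positivity) hle 2
        _ = (1 - 2 * X t ω / n) ^ 2 := sq_abs _
    have h2 : c ^ (2 * t) ≤ c ^ (2 * t₁) :=
      pow_le_pow_of_le_one hc0.le hc1 (by omega)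
    have hSval : S t ω = (1 - 2 * X t ω / n) ^ 2 / c ^ (2 * t) := by
      simp only [hSdef, hMdef]
      rw [div_mul_div_comm, ← pow_add, ← two_mul, ← sq]
    have hSt : e ≤ S t ω := by
      rw [hSval, hedef]
      exact div_le_div₀ (sq_nonneg _) h1 (hcpow _) h2
    have hmem : t ∈ Finset.range (t₂ + 1) := Finset.mem_range.mpr (by omega)
    refine le_trans ?_ (Finset.le_sup' (fun j => S j ω) hmem)
    rw [hcoe]; exact hSt
  have hnonneg : (0 : ℕ → Ω → ℝ) ≤ S := fun t ω => mul_self_nonneg _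
  have hmax := maximal_ineq hsub hnonneg (ε := e.toNNReal) t₂
  have hIB : ∫ ω in B, S t₂ ω ∂μ ≤ ∫ ω, S t₂ ω ∂μ :=
    setIntegral_le_integral (hSint t₂) (ae_of_all _ fun ω => mul_self_nonneg _)
  set I : ℝ := ∫ ω, S t₂ ω ∂μ with hIdef
  have key : (e.toNNReal : ℝ≥0∞) * μ {ω | ∃ t, t₁ ≤ t ∧ t ≤ t₂ ∧ r < |X t ω - (n : ℝ) / 2|}
      ≤ ENNReal.ofReal I := by
    calc (e.toNNReal : ℝ≥0∞) * μ {ω | ∃ t, t₁ ≤ t ∧ t ≤ t₂ ∧ r < |X t ω - (n : ℝ) / 2|}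
        ≤ (e.toNNReal : ℝ≥0∞) * μ B := mul_le_mul_right (measure_mono hAB) _
      _ ≤ ENNReal.ofReal (∫ ω in B, S t₂ ω ∂μ) := by
          rw [← smul_eq_mul, ← ENNReal.smul_def]; exact hmax
      _ ≤ ENNReal.ofReal I := ENNReal.ofReal_le_ofReal hIB
  have hofe : ENNReal.ofReal e = (e.toNNReal : ℝ≥0∞) := rfl
  have hstep : μ {ω | ∃ t, t₁ ≤ t ∧ t ≤ t₂ ∧ r < |X t ω - (n : ℝ) / 2|}
      ≤ ENNReal.ofReal (I / e) := by
    rw [ENNReal.ofReal_div_of_pos he,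
      ENNReal.le_div_iff_mul_le (Or.inl (by simp [ENNReal.ofReal_pos.mpr he |>.ne']))
        (Or.inl ENNReal.ofReal_ne_top), mul_comm, hofe]
    exact key
  refine hstep.trans (ENNReal.ofReal_le_ofReal ?_)
  -- now the real-number computation
  have hz : c ^ (-(2 : ℤ) * (t₂ - t₁ : ℤ)) = c ^ (2 * t₁) / c ^ (2 * t₂) := by
    rw [show -(2 : ℤ) * ((t₂ : ℤ) - (t₁ : ℤ)) = ((2 * t₁ : ℕ) : ℤ) - ((2 * t₂ : ℕ) : ℤ) by
      push_cast; ring]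
    rw [zpow_sub₀ hc0.ne', zpow_natCast, zpow_natCast]
  have hI : I = (∫ ω, (1 - 2 * X t₂ ω / n) ^ 2 ∂μ) * (c ^ (2 * t₂))⁻¹ := by
    have heq : ∀ ω, S t₂ ω = (1 - 2 * X t₂ ω / n) ^ 2 * (c ^ (2 * t₂))⁻¹ := by
      intro ω
      simp only [hSdef, hMdef]
      rw [div_mul_div_comm, ← pow_add, ← two_mul, ← sq, div_eq_mul_inv]
    rw [hIdef]
    simp_rw [heq]
    exact integral_mul_const _ _
  rw [hz, hI, hedef]
  have hc2 : (0 : ℝ) < c ^ (2 * t₁) := hcpow _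
  have hc3 : (0 : ℝ) < c ^ (2 * t₂) := hcpow _
  apply le_of_eq
  field_simp
  ring
end

section
/- Let (Z_t) be a non-negative supermartingale adapted to a filtration (F_t), with Z_0 = z_0, |Z_{t+1} - Z_t| ≤ B for all t, and Var(Z_{t+1} | F_t) > σ² on the event {τ > t}, where τ is a stopping time. Then for every u > 12B²/σ², P(τ > u) ≤ 4z_0/(σ√u). -/
open MeasureTheory


lemma aux_int {Ω : Type*} [m0 : MeasurableSpace Ω] (μ : Measure Ω) [IsFiniteMeasure μ]
    {f : Ω → ℝ} {C : ℝ} (hf : Measurable f) (h : ∀ᵐ ω ∂μ, |f ω| ≤ C) :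
    Integrable f μ :=
  ⟨hf.aestronglyMeasurable, HasFiniteIntegral.of_bounded (C := C) (by simpa [Real.norm_eq_abs] using h)⟩

lemma aux_core {Ω : Type*} [m0 : MeasurableSpace Ω] (μ : Measure Ω) [IsProbabilityMeasure μ]
    (m : MeasurableSpace Ω) (hm : m ≤ m0) (X : Ω → ℝ) (c C : ℝ) (hC : 0 ≤ C)
    (hX : Measurable[m0] X) (hXb : ∀ ω, |X ω| ≤ C) :
    (μ[(fun ω' => (c - X ω')^2)|m]) =ᵐ[μ]
      (fun ω => (μ[(fun ω' => (X ω' - (μ[X|m]) ω')^2)|m]) ω + (c - (μ[X|m]) ω)^2) := by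
  set E : Ω → ℝ := μ[X|m] with hE
  have hXint : Integrable X μ := aux_int (m0 := m0) μ hX (ae_of_all _ hXb)
  have hEsm : StronglyMeasurable[m] E := stronglyMeasurable_condExp
  have hEmeas : Measurable[m0] E := (hEsm.mono hm).measurable
  have hEb : ∀ᵐ ω ∂μ, |E ω| ≤ C := by
    have := ae_bdd_condExp_of_ae_bdd (μ := μ) (m := m) (R := C.toNNReal) (f := X)
      (ae_of_all _ fun ω => by simpa [Real.coe_toNNReal C hC] using hXb ω)
    simpa [hE, Real.coe_toNNReal C hC] using this
  set q : Ω → ℝ := fun ω => (X ω - E ω)^2 with hq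
  set g : Ω → ℝ := fun ω => (c - E ω)^2 with hg
  set r : Ω → ℝ := fun ω => (c - E ω) * (2 * (X ω - E ω)) with hr
  have hqint : Integrable q μ := by
    refine aux_int (m0 := m0) μ (C := (2*C)^2) ((hX.sub hEmeas).pow_const 2) ?_
    filter_upwards [hEb] with ω hω
    obtain ⟨hx1,hx2⟩ := abs_le.1 (hXb ω); obtain ⟨he1,he2⟩ := abs_le.1 hω
    simp only [hq]; rw [abs_of_nonneg (sq_nonneg _)]
    nlinarith [mul_nonneg (by linarith : (0:ℝ) ≤ 2*C - (X ω - E ω))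
      (by linarith : (0:ℝ) ≤ 2*C + (X ω - E ω))]
  have hgsm : StronglyMeasurable[m] g :=
    (continuous_pow 2).comp_stronglyMeasurable (stronglyMeasurable_const.sub hEsm)
  have hgint : Integrable g μ := by
    refine aux_int (m0 := m0) μ (C := (|c| + C)^2) ((measurable_const.sub hEmeas).pow_const 2) ?_
    filter_upwards [hEb] with ω hω
    obtain ⟨he1,he2⟩ := abs_le.1 hω
    have hc0 := abs_nonneg c; have hc1 := neg_abs_le c; have hc2 := le_abs_self c
    simp only [hg]; rw [abs_of_nonneg (sq_nonneg _)]
    nlinarith [mul_nonneg (by linarith : (0:ℝ) ≤ |c| + C - (c - E ω))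
      (by linarith : (0:ℝ) ≤ |c| + C + (c - E ω))]
  have hlsm : StronglyMeasurable[m] (fun ω => c - E ω) := stronglyMeasurable_const.sub hEsm
  have hrrint : Integrable (fun ω => 2 * (X ω - E ω)) μ := by
    refine aux_int (m0 := m0) μ (C := 2*(2*C)) (measurable_const.mul (hX.sub hEmeas)) ?_
    filter_upwards [hEb] with ω hω
    obtain ⟨hx1,hx2⟩ := abs_le.1 (hXb ω); obtain ⟨he1,he2⟩ := abs_le.1 hω
    rw [abs_mul, abs_two]
    have : |X ω - E ω| ≤ 2*C := abs_le.2 ⟨by linarith, by linarith⟩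
    linarith
  have hrint : Integrable r μ := by
    refine aux_int (m0 := m0) μ (C := (|c|+C)*(2*(2*C)))
      ((measurable_const.sub hEmeas).mul (measurable_const.mul (hX.sub hEmeas))) ?_
    filter_upwards [hEb] with ω hω
    obtain ⟨hx1,hx2⟩ := abs_le.1 (hXb ω); obtain ⟨he1,he2⟩ := abs_le.1 hω
    have hc1 := neg_abs_le c; have hc2 := le_abs_self c
    have h1 : |c - E ω| ≤ |c| + C := abs_le.2 ⟨by linarith, by linarith⟩
    have h2 : |2 * (X ω - E ω)| ≤ 2*(2*C) := by
      rw [abs_mul, abs_two]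
      have : |X ω - E ω| ≤ 2*C := abs_le.2 ⟨by linarith, by linarith⟩
      linarith
    simp only [hr]
    calc |(c - E ω) * (2 * (X ω - E ω))| = |c - E ω| * |2 * (X ω - E ω)| := abs_mul _ _
      _ ≤ (|c|+C)*(2*(2*C)) := mul_le_mul h1 h2 (abs_nonneg _) (by positivity)
  have hwint : Integrable (g - r) μ := hgint.sub hrint
  have e1 : (μ[(fun ω' => (c - X ω')^2)|m]) =ᵐ[μ] μ[q + (g - r)|m] := by
    refine condExp_congr_ae (ae_of_all _ fun ω => ?_)
    simp only [Pi.add_apply, Pi.sub_apply, hq, hg, hr]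
    ring
  have e2 : μ[q + (g - r)|m] =ᵐ[μ] μ[q|m] + μ[g - r|m] := condExp_add hqint hwint m
  have e3 : μ[g - r|m] =ᵐ[μ] μ[g|m] - μ[r|m] := condExp_sub hgint hrint m
  have e4 : μ[g|m] = g := condExp_of_stronglyMeasurable hm hgsm hgint
  have e5 : μ[r|m] =ᵐ[μ] (fun ω => c - E ω) * μ[(fun ω => 2 * (X ω - E ω))|m] := by
    have h0 : r = (fun ω => c - E ω) * (fun ω => 2 * (X ω - E ω)) := rfl
    rw [h0]
    exact condExp_mul_of_stronglyMeasurable_left hlsm (h0 ▸ hrint) hrrint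
  have e6 : μ[(fun ω => 2 * (X ω - E ω))|m] =ᵐ[μ] 0 := by
    have h7 : (fun ω => 2 * (X ω - E ω)) = (2 : ℝ) • (X - E) := by
      funext ω; simp [Pi.smul_apply, Pi.sub_apply]
    rw [h7]
    have h8 : μ[(2 : ℝ) • (X - E)|m] =ᵐ[μ] (2:ℝ) • μ[X - E|m] := condExp_smul _ _ m
    have h9 : μ[X - E|m] =ᵐ[μ] μ[X|m] - μ[E|m] := condExp_sub hXint integrable_condExp m
    have h10 : μ[E|m] = E := condExp_of_stronglyMeasurable hm hEsm integrable_condExp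
    filter_upwards [h8, h9] with ω h8 h9
    simp only [Pi.smul_apply, Pi.sub_apply, Pi.zero_apply, smul_eq_mul] at *
    rw [h8, h9, h10]
    show 2 * (E ω - E ω) = 0
    ring
  filter_upwards [e1, e2, e3, e5, e6] with ω e1 e2 e3 e5 e6
  simp only [Pi.add_apply, Pi.sub_apply, Pi.mul_apply, Pi.zero_apply] at *
  rw [e1, e2, e3, e4, e5, e6]
  ring

set_option maxHeartbeats 1000000 in
/-- (Levin–Peres–Wilmer, Proposition 17.20.) Let `(Z_t)` be a non-negative supermartingale
adapted to `(ℱ_t)` with `Z_0 = z₀`, increments bounded by `B`, and conditional variance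
`Var(Z_{t+1} | ℱ_t) > σ²` on `{τ > t}` for a stopping time `τ`. Then for every `u > 12B²/σ²`,
`P(τ > u) ≤ 4z₀/(σ√u)`. -/
theorem hitting_time_estimate {Ω : Type*} [m0 : MeasurableSpace Ω]
    (μ : Measure Ω) [IsProbabilityMeasure μ] (ℱ : Filtration ℕ m0)
    (Z : ℕ → Ω → ℝ) (B σ z₀ : ℝ) (hB : 0 < B) (hσ : 0 < σ) (hz₀ : 0 < z₀)
    (hsuper : Supermartingale Z ℱ μ)
    (hnonneg : ∀ t ω, 0 ≤ Z t ω)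
    (hZ0 : Z 0 = fun _ => z₀)
    (hincr : ∀ t ω, |Z (t + 1) ω - Z t ω| ≤ B)
    (τ : Ω → ℕ) (hτ : IsStoppingTime ℱ (fun ω => (τ ω : WithTop ℕ)))
    (hvar : ∀ t, ∀ᵐ ω ∂μ, t < τ ω →
      σ ^ 2 < (μ[(fun ω' => (Z (t + 1) ω' - (μ[Z (t + 1) | ℱ t]) ω') ^ 2) | ℱ t]) ω) :
    ∀ u : ℕ, 12 * B ^ 2 / σ ^ 2 < u →
      μ {ω | u < τ ω} ≤ ENNReal.ofReal (4 * z₀ / (σ * Real.sqrt u)) := by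
  intro u hu
  have hσ2 : (0:ℝ) < σ^2 := by positivity
  have hu0 : (0:ℝ) < u := lt_trans (by positivity) hu
  have hru : (0:ℝ) ≤ u := le_of_lt hu0
  have hsq : (0:ℝ) < Real.sqrt u := Real.sqrt_pos.2 hu0
  set x : ℝ := σ * Real.sqrt u with hxdef
  have hx0 : 0 < x := mul_pos hσ hsq
  have hx2 : x^2 = σ^2 * u := by rw [hxdef, mul_pow, Real.sq_sqrt hru]
  have hs2 : (Real.sqrt 2)^2 = 2 := Real.sq_sqrt (by norm_num)
  have hs20 : 0 < Real.sqrt 2 := Real.sqrt_pos.2 (by norm_num)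
  have hs2le : Real.sqrt 2 ≤ 1.5 := by nlinarith
  set h : ℝ := x / Real.sqrt 2 with hhdef
  have hh0 : 0 < h := div_pos hx0 hs20
  have hxh : x = Real.sqrt 2 * h := by rw [hhdef]; field_simp
  have hB12 : 12 * B^2 ≤ x^2 := by
    rw [hx2]; rw [div_lt_iff₀ hσ2] at hu; nlinarith
  have hBx : 3.4 * B ≤ x := by nlinarith [mul_pos hB hx0, sq_nonneg (x - 3.4*B)]
  by_cases hzh : h ≤ z₀
  · refine le_trans prob_le_one ?_
    rw [ENNReal.one_le_ofReal, le_div_iff₀ hx0]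
    nlinarith
  push_neg at hzh
  -- basic facts about Z
  have hZsm : ∀ t, StronglyMeasurable[ℱ t] (Z t) := fun t => hsuper.1 t
  have hZmeas : ∀ t, Measurable[m0] (Z t) := fun t => ((hZsm t).mono (ℱ.le t)).measurable
  have hZint : ∀ t, Integrable (Z t) μ := hsuper.2.2
  have hZub : ∀ t (ω : Ω), Z t ω ≤ z₀ + t * B := by
    intro t
    induction t with
    | zero => intro ω; simp [hZ0]
    | succ t ih =>
      intro ω
      have h1 := (abs_le.1 (hincr t ω)).2
      have h2 := ih ω
      push_cast
      linarith
  have htB : ∀ t : ℕ, (0:ℝ) ≤ z₀ + t * B := by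
    intro t
    have : (0:ℝ) ≤ (t:ℝ) := Nat.cast_nonneg t
    nlinarith
  have hZabs : ∀ t (ω : Ω), |Z t ω| ≤ z₀ + t * B := fun t ω =>
    abs_le.2 ⟨by linarith [hnonneg t ω, htB t], hZub t ω⟩
  -- the sets K and G
  set K : ℕ → Set Ω := fun t => {ω | ∀ s ≤ t, Z s ω < h} with hKdef
  set G : ℕ → Set Ω := fun t => {ω | t < τ ω} ∩ K t with hGdef
  have hKm : ∀ t, MeasurableSet[ℱ t] (K t) := by
    intro t
    have hKeq : K t = ⋂ s ∈ Set.Iic t, {ω | Z s ω < h} := by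
      ext ω; simp [hKdef]
    rw [hKeq]
    refine MeasurableSet.biInter (Set.to_countable _) (fun s hs => ?_)
    exact ℱ.mono hs _ (measurableSet_lt ((hZsm s).measurable) measurable_const)
  have hGm : ∀ t, MeasurableSet[ℱ t] (G t) := by
    intro t
    have h1 : MeasurableSet[ℱ t] {ω | t < τ ω} := by
      simpa [Set.compl_setOf, not_le] using (hτ t).compl
    exact h1.inter (hKm t)
  have hGm0 : ∀ t, MeasurableSet (G t) := fun t => ℱ.le t _ (hGm t)
  have hKm0 : ∀ t, MeasurableSet (K t) := fun t => ℱ.le t _ (hKm t)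
  have hGanti : ∀ s t, s ≤ t → G t ⊆ G s := fun s t hst ω hω =>
    ⟨lt_of_le_of_lt hst hω.1, fun r hr => hω.2 r (hr.trans hst)⟩
  have hKanti : ∀ s t, s ≤ t → K t ⊆ K s := fun s t hst ω hω r hr => hω r (hr.trans hst)
  -- supermartingale set-integral property
  have hsetZ : ∀ t (s : Set Ω), MeasurableSet[ℱ t] s →
      ∫ ω in s, Z (t+1) ω ∂μ ≤ ∫ ω in s, Z t ω ∂μ := by
    intro t s hs
    rw [← setIntegral_condExp (ℱ.le t) (hZint (t+1)) hs]
    refine setIntegral_mono_ae_restrict integrable_condExp.integrableOn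
      ((hZint t).integrableOn) ?_
    exact ae_restrict_of_ae (hsuper.2.1 t (t+1) (Nat.le_succ t))
  -- the stopped process W
  obtain ⟨W, hW0, hWs⟩ : ∃ W : ℕ → Ω → ℝ, W 0 = Z 0 ∧ ∀ t, W (t+1) =
      fun ω => W t ω + (G t).indicator (fun ω' => Z (t+1) ω' - Z t ω') ω :=
    ⟨fun n => Nat.rec (Z 0) (fun t Wt ω => Wt ω + (G t).indicator
      (fun ω' => Z (t+1) ω' - Z t ω') ω) n, rfl, fun t => rfl⟩
  have hWinv : ∀ t, (∀ ω, 0 ≤ W t ω ∧ W t ω ≤ h + B) ∧ (∀ ω ∈ G t, W t ω = Z t ω) := by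
    intro t
    induction t with
    | zero =>
      constructor
      · intro ω
        rw [hW0, hZ0]
        constructor
        · exact le_of_lt hz₀
        · linarith
      · intro ω _; rw [hW0]
    | succ t ih =>
      have hstep : ∀ ω ∈ G t, W (t+1) ω = Z (t+1) ω := by
        intro ω hω
        simp only [hWs t]
        rw [Set.indicator_of_mem hω, ih.2 ω hω]
        ring
      constructor
      · intro ω
        by_cases hω : ω ∈ G t
        · rw [hstep ω hω]
          refine ⟨hnonneg _ _, ?_⟩
          have h1 := (abs_le.1 (hincr t ω)).2
          have h2 : Z t ω < h := hω.2 t le_rfl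
          linarith
        · simp only [hWs t]
          rw [Set.indicator_of_notMem hω, add_zero]
          exact ih.1 ω
      · intro ω hω
        exact hstep ω (hGanti t (t+1) (Nat.le_succ t) hω)
  have hWmeas : ∀ t, Measurable[m0] (W t) := by
    intro t
    induction t with
    | zero => rw [hW0]; exact hZmeas 0
    | succ t ih =>
      rw [hWs t]
      exact ih.add (((hZmeas (t+1)).sub (hZmeas t)).indicator (hGm0 t))
  have hDint : ∀ t, Integrable (fun ω => (h + B - W t ω)^2) μ := by
    intro t
    refine aux_int μ (C := (h+B)^2) ((measurable_const.sub (hWmeas t)).pow_const 2) ?_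
    refine ae_of_all _ fun ω => ?_
    obtain ⟨h1, h2⟩ := (hWinv t).1 ω
    rw [abs_of_nonneg (sq_nonneg _)]
    nlinarith
  -- key one-step inequality
  have key : ∀ t, ∫ ω, (h + B - W t ω)^2 ∂μ + σ^2 * (μ (G t)).toReal
      ≤ ∫ ω, (h + B - W (t+1) ω)^2 ∂μ := by
    intro t
    have hfint : Integrable (fun ω => (h + B - Z (t+1) ω)^2) μ := by
      refine aux_int μ (C := (h + B + (z₀ + ((t+1 : ℕ) : ℝ) * B))^2)
        ((measurable_const.sub (hZmeas (t+1))).pow_const 2) ?_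
      refine ae_of_all _ fun ω => ?_
      have h1 := hnonneg (t+1) ω
      have h2 := hZub (t+1) ω
      have h3 := htB (t+1)
      rw [abs_of_nonneg (sq_nonneg _)]
      nlinarith [mul_nonneg (by linarith : (0:ℝ) ≤ z₀ + ((t+1 : ℕ) : ℝ) * B + Z (t+1) ω)
        (by linarith : (0:ℝ) ≤ 2*(h+B) + (z₀ + ((t+1 : ℕ) : ℝ) * B) - Z (t+1) ω)]
    have hZt2int : Integrable (fun ω => (h + B - Z t ω)^2) μ := by
      refine aux_int μ (C := (h + B + (z₀ + t * B))^2)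
        ((measurable_const.sub (hZmeas t)).pow_const 2) ?_
      refine ae_of_all _ fun ω => ?_
      have h1 := hnonneg t ω
      have h2 := hZub t ω
      have h3 := htB t
      rw [abs_of_nonneg (sq_nonneg _)]
      nlinarith [mul_nonneg (by linarith : (0:ℝ) ≤ z₀ + (t : ℝ) * B + Z t ω)
        (by linarith : (0:ℝ) ≤ 2*(h+B) + (z₀ + (t : ℝ) * B) - Z t ω)]
    -- identity for conditional second moment
    have hid := aux_core (m0 := m0) μ (ℱ t) (ℱ.le t) (Z (t+1)) (h + B) (z₀ + ((t+1 : ℕ) : ℝ) * B)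
      (htB (t+1)) (hZmeas (t+1)) (hZabs (t+1))
    -- core set inequality on G t
    have hcore : σ^2 * (μ (G t)).toReal + ∫ ω in G t, (h + B - Z t ω)^2 ∂μ
        ≤ ∫ ω in G t, (h + B - Z (t+1) ω)^2 ∂μ := by
      rw [← setIntegral_condExp (ℱ.le t) hfint (hGm t)]
      have hmono : ∫ ω in G t, (σ^2 + (h + B - Z t ω)^2) ∂μ
          ≤ ∫ ω in G t, (μ[(fun ω' => (h + B - Z (t+1) ω')^2)|ℱ t]) ω ∂μ := by
        refine setIntegral_mono_ae_restrict
          ((integrable_const _).add hZt2int).integrableOn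
          integrable_condExp.integrableOn ?_
        refine (ae_restrict_iff' (hGm0 t)).2 ?_
        filter_upwards [hid, hvar t, hsuper.2.1 t (t+1) (Nat.le_succ t)] with ω h1 h2 h3 hω
        rw [h1]
        have hvω := h2 hω.1
        have hZth : Z t ω < h := hω.2 t le_rfl
        have hm := h3
        nlinarith [hm, hZth]
      calc σ^2 * (μ (G t)).toReal + ∫ ω in G t, (h + B - Z t ω)^2 ∂μ
          = ∫ ω in G t, (σ^2 + (h + B - Z t ω)^2) ∂μ := by
            rw [integral_add (integrable_const _) hZt2int.integrableOn, setIntegral_const]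
            simp [Measure.restrict_apply_univ, smul_eq_mul, mul_comm, measureReal_def]
        _ ≤ _ := hmono
    have hon1 : ∫ ω in G t, (h + B - W (t+1) ω)^2 ∂μ = ∫ ω in G t, (h + B - Z (t+1) ω)^2 ∂μ := by
      refine setIntegral_congr_fun (hGm0 t) fun ω hω => ?_
      simp only [hWs t]
      rw [Set.indicator_of_mem hω, (hWinv t).2 ω hω]
      ring
    have hon2 : ∫ ω in G t, (h + B - W t ω)^2 ∂μ = ∫ ω in G t, (h + B - Z t ω)^2 ∂μ := by
      refine setIntegral_congr_fun (hGm0 t) fun ω hω => ?_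
      rw [(hWinv t).2 ω hω]
    have hoff : ∫ ω in (G t)ᶜ, (h + B - W (t+1) ω)^2 ∂μ
        = ∫ ω in (G t)ᶜ, (h + B - W t ω)^2 ∂μ := by
      refine setIntegral_congr_fun (hGm0 t).compl fun ω hω => ?_
      simp only [hWs t]
      rw [Set.indicator_of_notMem hω, add_zero]
    rw [← integral_add_compl (hGm0 t) (hDint (t+1)), ← integral_add_compl (hGm0 t) (hDint t),
      hoff, hon1, hon2]
    linarith
  -- telescoping
  have tele : ∀ n, n ≤ u → (h + B - z₀)^2 + σ^2 * (n * (μ (G u)).toReal)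
      ≤ ∫ ω, (h + B - W n ω)^2 ∂μ := by
    intro n
    induction n with
    | zero =>
      intro _
      have : (fun ω => (h + B - W 0 ω)^2) = fun _ : Ω => (h + B - z₀)^2 := by
        funext ω; rw [hW0, hZ0]
      rw [this, integral_const]
      simp
    | succ n ih =>
      intro hn
      have hn' : n ≤ u := le_of_lt (Nat.lt_of_succ_le hn)
      have hGle : (μ (G u)).toReal ≤ (μ (G n)).toReal :=
        ENNReal.toReal_mono (measure_ne_top μ _) (measure_mono (hGanti n u hn'))
      have h1 := key n
      have h2 := ih hn'
      have h3 : (0:ℝ) ≤ (μ (G u)).toReal := ENNReal.toReal_nonneg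
      push_cast
      nlinarith
  have hup : ∫ ω, (h + B - W u ω)^2 ∂μ ≤ (h + B)^2 := by
    calc ∫ ω, (h + B - W u ω)^2 ∂μ ≤ ∫ _ : Ω, (h + B)^2 ∂μ := by
          refine integral_mono (hDint u) (integrable_const _) fun ω => ?_
          obtain ⟨h1, h2⟩ := (hWinv u).1 ω
          nlinarith
      _ = (h + B)^2 := by simp
  have hGub : (μ (G u)).toReal ≤ 2 * z₀ * (h + B) / x^2 := by
    have h1 := tele u le_rfl
    rw [le_div_iff₀ (by positivity)]
    have h4 : (μ (G u)).toReal * x^2 = σ^2 * (u * (μ (G u)).toReal) := by rw [hx2]; ring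
    have h5 : (h + B - z₀)^2 = (h + B)^2 - 2*z₀*(h+B) + z₀^2 := by ring
    have h6 := sq_nonneg z₀
    linarith [hup]
  -- the maximal-inequality part, via the process V stopped at the first time Z ≥ h
  obtain ⟨V, hV0, hVs⟩ : ∃ V : ℕ → Ω → ℝ, V 0 = Z 0 ∧ ∀ t, V (t+1) =
      fun ω => V t ω + (K t).indicator (fun ω' => Z (t+1) ω' - Z t ω') ω :=
    ⟨fun n => Nat.rec (Z 0) (fun t Vt ω => Vt ω + (K t).indicator
      (fun ω' => Z (t+1) ω' - Z t ω') ω) n, rfl, fun t => rfl⟩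
  have hVinv : ∀ t, (∀ ω, 0 ≤ V t ω ∧ V t ω ≤ z₀ + t * B) ∧ (∀ ω ∈ K t, V t ω = Z t ω)
      ∧ (∀ ω, ω ∉ K t → h ≤ V t ω) := by
    intro t
    induction t with
    | zero =>
      have hK0 : ∀ ω : Ω, ω ∈ K 0 := by
        intro ω s hs
        interval_cases s
        rw [hZ0]; exact hzh
      refine ⟨fun ω => ?_, fun ω _ => by rw [hV0], fun ω hω => absurd (hK0 ω) hω⟩
      rw [hV0, hZ0]
      refine ⟨hz₀.le, ?_⟩
      have h0 : ((0:ℕ):ℝ) * B = 0 := by norm_num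
      show z₀ ≤ z₀ + ((0:ℕ):ℝ) * B
      rw [h0, add_zero]
    | succ t ih =>
      obtain ⟨ihb, ihK, ihn⟩ := ih
      have hstep : ∀ ω ∈ K t, V (t+1) ω = Z (t+1) ω := by
        intro ω hω
        simp only [hVs t]
        rw [Set.indicator_of_mem hω, ihK ω hω]
        ring
      have hfreeze : ∀ ω, ω ∉ K t → V (t+1) ω = V t ω := by
        intro ω hω
        simp only [hVs t]
        rw [Set.indicator_of_notMem hω, add_zero]
      refine ⟨fun ω => ?_, fun ω hω => hstep ω (hKanti t (t+1) (Nat.le_succ t) hω), fun ω hω => ?_⟩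
      · by_cases hω : ω ∈ K t
        · rw [hstep ω hω]
          refine ⟨hnonneg _ _, ?_⟩
          have := hZub (t+1) ω
          push_cast at this ⊢
          linarith
        · rw [hfreeze ω hω]
          obtain ⟨hb1, hb2⟩ := ihb ω
          have : (0:ℝ) ≤ B := hB.le
          constructor
          · exact hb1
          · push_cast
            nlinarith
      · by_cases hωt : ω ∈ K t
        · have hV1 : V (t+1) ω = Z (t+1) ω := hstep ω hωt
          rw [hV1]
          by_contra hcon
          push_neg at hcon
          refine hω fun s hs => ?_
          rcases Nat.lt_or_ge s (t+1) with hlt | hge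
          · exact hωt s (Nat.lt_succ_iff.1 hlt)
          · have hseq : s = t + 1 := le_antisymm hs hge
            rw [hseq]; exact hcon
        · rw [hfreeze ω hωt]
          exact ihn ω hωt
  have hVmeas : ∀ t, Measurable[m0] (V t) := by
    intro t
    induction t with
    | zero => rw [hV0]; exact hZmeas 0
    | succ t ih =>
      rw [hVs t]
      exact ih.add (((hZmeas (t+1)).sub (hZmeas t)).indicator (hKm0 t))
  have hVint : ∀ t, Integrable (V t) μ := by
    intro t
    refine aux_int μ (C := z₀ + t * B) (hVmeas t) (ae_of_all _ fun ω => ?_)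
    obtain ⟨h1, h2⟩ := (hVinv t).1 ω
    exact abs_le.2 ⟨by linarith [htB t], h2⟩
  have hVdec : ∀ t, ∫ ω, V (t+1) ω ∂μ ≤ ∫ ω, V t ω ∂μ := by
    intro t
    have hind : Integrable (fun ω => (K t).indicator (fun ω' => Z (t+1) ω' - Z t ω') ω) μ :=
      (((hZint (t+1)).sub (hZint t)).indicator (hKm0 t))
    have : ∫ ω, V (t+1) ω ∂μ = ∫ ω, V t ω ∂μ
        + ∫ ω, (K t).indicator (fun ω' => Z (t+1) ω' - Z t ω') ω ∂μ := by
      simp only [hVs t]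
      exact integral_add (hVint t) hind
    rw [this, integral_indicator (hKm0 t)]
    have h1 : ∫ ω in K t, (Z (t+1) ω - Z t ω) ∂μ
        = (∫ ω in K t, Z (t+1) ω ∂μ) - ∫ ω in K t, Z t ω ∂μ :=
      integral_sub ((hZint (t+1)).integrableOn) ((hZint t).integrableOn)
    have h2 := hsetZ t (K t) (hKm t)
    rw [h1]
    linarith
  have hVchain : ∀ n, ∫ ω, V n ω ∂μ ≤ z₀ := by
    intro n
    induction n with
    | zero =>
      have : (fun ω => V 0 ω) = fun _ : Ω => z₀ := by funext ω; rw [hV0, hZ0]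
      rw [this, integral_const]
      simp
    | succ n ih => exact le_trans (hVdec n) ih
  have hKub : (μ ((K u)ᶜ)).toReal ≤ z₀ / h := by
    rw [le_div_iff₀ hh0]
    have hlow : (μ ((K u)ᶜ)).toReal * h ≤ ∫ ω, V u ω ∂μ := by
      have hset : ∫ ω, ((K u)ᶜ).indicator (fun _ => h) ω ∂μ ≤ ∫ ω, V u ω ∂μ := by
        refine integral_mono ((integrable_const h).indicator (hKm0 u).compl) (hVint u)
          fun ω => ?_
        by_cases hω : ω ∈ (K u)ᶜ
        · rw [Set.indicator_of_mem hω]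
          exact (hVinv u).2.2 ω hω
        · rw [Set.indicator_of_notMem hω]
          exact ((hVinv u).1 ω).1
      rw [integral_indicator (hKm0 u).compl, setIntegral_const, smul_eq_mul] at hset
      exact hset
    linarith [hVchain u]
  -- final assembly
  have hsub : {ω | u < τ ω} ⊆ G u ∪ (K u)ᶜ := by
    intro ω hω
    by_cases hk : ω ∈ K u
    · exact Or.inl ⟨hω, hk⟩
    · exact Or.inr hk
  have hGfin : μ (G u) ≤ ENNReal.ofReal (2 * z₀ * (h + B) / x^2) := by
    rw [← ENNReal.ofReal_toReal (measure_ne_top μ (G u))]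
    exact ENNReal.ofReal_le_ofReal hGub
  have hKfin : μ ((K u)ᶜ) ≤ ENNReal.ofReal (z₀ / h) := by
    rw [← ENNReal.ofReal_toReal (measure_ne_top μ ((K u)ᶜ))]
    exact ENNReal.ofReal_le_ofReal hKub
  have hfinal : 2 * z₀ * (h + B) / x^2 + z₀ / h ≤ 4 * z₀ / x := by
    have hBh : 1.5 * B ≤ h := by
      have h1 : Real.sqrt 2 * h ≤ 1.5 * h := mul_le_mul_of_nonneg_right hs2le hh0.le
      rw [← hxh] at h1
      linarith [hBx, hB]
    rw [div_add_div _ _ (by positivity) (ne_of_gt hh0), div_le_div_iff₀ (by positivity) hx0]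
    have e1 : (2 * z₀ * (h + B) * h + x^2 * z₀) * x
        = Real.sqrt 2 * (4*z₀*h^3 + 2*z₀*B*h^2) := by
      rw [hxh]
      linear_combination (Real.sqrt 2 * z₀ * h^3) * hs2
    have e2 : 4 * z₀ * (x^2 * h) = 8 * z₀ * h^3 := by
      rw [hxh]
      linear_combination (4 * z₀ * h^3) * hs2
    rw [e1, e2]
    have e3 : (0:ℝ) ≤ 4*z₀*h^3 + 2*z₀*B*h^2 := by positivity
    have e4 : Real.sqrt 2 * (4*z₀*h^3 + 2*z₀*B*h^2) ≤ 1.5 * (4*z₀*h^3 + 2*z₀*B*h^2) :=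
      mul_le_mul_of_nonneg_right hs2le e3
    nlinarith [mul_nonneg (mul_nonneg hz₀.le (mul_nonneg hh0.le hh0.le))
      (by linarith : (0:ℝ) ≤ 2*h - 3*B)]
  calc μ {ω | u < τ ω} ≤ μ (G u ∪ (K u)ᶜ) := measure_mono hsub
    _ ≤ μ (G u) + μ ((K u)ᶜ) := measure_union_le _ _
    _ ≤ ENNReal.ofReal (2 * z₀ * (h + B) / x^2) + ENNReal.ofReal (z₀ / h) :=
        add_le_add hGfin hKfin
    _ = ENNReal.ofReal (2 * z₀ * (h + B) / x^2 + z₀ / h) :=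
        (ENNReal.ofReal_add (by positivity) (by positivity)).symm
    _ ≤ ENNReal.ofReal (4 * z₀ / x) := ENNReal.ofReal_le_ofReal hfinal
    _ = ENNReal.ofReal (4 * z₀ / (σ * Real.sqrt u)) := by rw [hxdef]
end

section
/- For n ≥ 2, k ≥ 1 with k = o(n), and γ ≥ 0, setting t(γ) = (n/(4k)) log n + γn/k and f_2(k) = 1 - 2(2n-1)k/n² + 2(2n-1)k(k-1)/(n²(n-1)), one has f_2(k)^{t(γ)} ≤ (1 - 2k/n)^{(n/(2k)) log n + 2γn/k}, and the right-hand side is at most C/(n e^{4γ}) for a universal constant C (for n sufficiently large). -/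
open Filter Real

/-- For `k = k(n) = o(n)` with `k ≥ 1`, setting `t(γ) = (n/(4k)) log n + γn/k` and
`f₂(k) = 1 - 2(2n-1)k/n² + 2(2n-1)k(k-1)/(n²(n-1))`, one has (for `n` sufficiently large)
`f₂(k)^{t(γ)} ≤ (1 - 2k/n)^{(n/(2k)) log n + 2γn/k}` for every `γ ≥ 0`, and the right-hand side
is at most `C/(n e^{4γ})` for a universal constant `C`. -/
theorem f2_power_decay (k : ℕ → ℕ) (hk1 : ∀ n, 1 ≤ k n)
    (hko : Tendsto (fun n : ℕ => (k n : ℝ) / n) atTop (nhds 0)) :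
    ∃ C : ℝ, 0 < C ∧ ∀ᶠ n : ℕ in atTop, ∀ γ : ℝ, 0 ≤ γ →
      (1 - 2 * (2 * (n : ℝ) - 1) * (k n) / (n : ℝ) ^ 2
          + 2 * (2 * (n : ℝ) - 1) * (k n) * ((k n : ℝ) - 1) / ((n : ℝ) ^ 2 * ((n : ℝ) - 1)))
          ^ ((n : ℝ) / (4 * k n) * Real.log n + γ * n / k n)
        ≤ (1 - 2 * (k n : ℝ) / n) ^ ((n : ℝ) / (2 * k n) * Real.log n + 2 * γ * n / k n) ∧
      (1 - 2 * (k n : ℝ) / n) ^ ((n : ℝ) / (2 * k n) * Real.log n + 2 * γ * n / k n)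
        ≤ C / ((n : ℝ) * Real.exp (4 * γ)) := by
  refine ⟨1, one_pos, ?_⟩
  have hsmall : ∀ᶠ n : ℕ in atTop, (k n : ℝ) / n < 1/8 :=
    hko.eventually (gt_mem_nhds (by norm_num : (0:ℝ) < 1/8))
  filter_upwards [hsmall, eventually_ge_atTop 8] with n hsn hn8 γ hγ
  set N : ℝ := (n : ℝ) with hNdef
  set K : ℝ := (k n : ℝ) with hKdef
  have hN8 : (8:ℝ) ≤ N := by simp only [hNdef]; exact_mod_cast hn8
  have hN : (0:ℝ) < N := by linarith
  have hK1 : (1:ℝ) ≤ K := by simp only [hKdef]; exact_mod_cast hk1 n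
  have hK : (0:ℝ) < K := by linarith
  have h8K : 8 * K < N := by
    have := (div_lt_iff₀ hN).mp hsn; linarith
  have hN1 : (0:ℝ) < N - 1 := by linarith
  have hKne : K ≠ 0 := ne_of_gt hK
  have hNne : N ≠ 0 := ne_of_gt hN
  have hlog : 0 ≤ Real.log N := Real.log_nonneg (by linarith)
  set t : ℝ := N / (4 * K) * Real.log N + γ * N / K with htdef
  have ht : 0 ≤ t := by
    have h1 : 0 ≤ N / (4 * K) * Real.log N := by positivity
    have h2 : 0 ≤ γ * N / K := by positivity
    simp only [htdef]; linarith
  set b1 : ℝ := 1 - 2 * K / N with hb1def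
  have hb1 : 0 ≤ b1 := by
    have : 2 * K / N < 1/4 := by rw [div_lt_iff₀ hN]; linarith
    simp only [hb1def]; linarith
  set b2 : ℝ := 1 - 2 * (2 * N - 1) * K / N ^ 2
      + 2 * (2 * N - 1) * K * (K - 1) / (N ^ 2 * (N - 1)) with hb2def
  have hb2 : 0 ≤ b2 := by
    have h1 : 2 * (2 * N - 1) * K / N ^ 2 ≤ 1/2 := by
      rw [div_le_iff₀ (by positivity)]; nlinarith
    have h2 : 0 ≤ 2 * (2 * N - 1) * K * (K - 1) / (N ^ 2 * (N - 1)) :=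
      div_nonneg (by nlinarith [mul_nonneg (mul_nonneg (show (0:ℝ) ≤ 2 * (2 * N - 1) by linarith) hK.le) (show (0:ℝ) ≤ K - 1 by linarith)]) (by positivity)
    simp only [hb2def]; linarith
  have hle : b2 ≤ b1 ^ 2 := by
    have key : b1 ^ 2 - b2 = 2 * K * (N - K) / (N ^ 2 * (N - 1)) := by
      simp only [hb1def, hb2def]
      field_simp
      ring
    have pos : 0 ≤ 2 * K * (N - K) / (N ^ 2 * (N - 1)) :=
      div_nonneg (by nlinarith) (by positivity)
    rw [← key] at pos
    linarith
  have hexp : N / (2 * K) * Real.log N + 2 * γ * N / K = 2 * t := by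
    simp only [htdef]; ring
  rw [hexp]
  constructor
  · calc b2 ^ t ≤ (b1 ^ 2) ^ t := Real.rpow_le_rpow hb2 hle ht
      _ = b1 ^ (2 * t) := by rw [Real.rpow_mul hb1, Real.rpow_two]
  · have hb1e : b1 ≤ Real.exp (-(2 * K / N)) := by
      have := Real.add_one_le_exp (-(2 * K / N))
      simp only [hb1def]; linarith
    have h2t : 0 ≤ 2 * t := by linarith
    calc b1 ^ (2 * t) ≤ Real.exp (-(2 * K / N)) ^ (2 * t) :=
          Real.rpow_le_rpow hb1 hb1e h2t
      _ = Real.exp (-(2 * K / N) * (2 * t)) := by rw [← Real.exp_mul]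
      _ = Real.exp (-(Real.log N + 4 * γ)) := by
          congr 1
          simp only [htdef]
          field_simp
          ring
      _ = 1 / (N * Real.exp (4 * γ)) := by
          rw [Real.exp_neg, Real.exp_add, Real.exp_log hN, one_div]
end

section
/- If A > 0 and X_0 ∈ {0,...,n} satisfies |X_0 - n/2| ≤ A√n, then f_2(X_0) ≤ f_1(n/2 + A√n)² ≤ C·A²/n for a universal constant C, where f_1(x) = 1 - 2x/n and f_2(x) = 1 - 2(2n-1)x/n² + 2(2n-1)x(x-1)/(n²(n-1)). -/
/-- There is a universal constant `C` such that for every `n ≥ 2`, `A > 0` and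
`X₀ ∈ {0,…,n}` with `|X₀ - n/2| ≤ A√n`, writing `f₁(x) = 1 - 2x/n` and
`f₂(x) = 1 - 2(2n-1)x/n² + 2(2n-1)x(x-1)/(n²(n-1))`, one has
`f₂(X₀) ≤ f₁(n/2 + A√n)² ≤ C·A²/n`. -/
theorem f2_bound_near_half :
    ∃ C : ℝ, 0 < C ∧ ∀ (n : ℕ), 2 ≤ n → ∀ (A : ℝ), 0 < A → ∀ (X₀ : ℕ), X₀ ≤ n →
      |(X₀ : ℝ) - (n : ℝ) / 2| ≤ A * Real.sqrt n →
      (1 - 2 * (2 * (n : ℝ) - 1) * (X₀ : ℝ) / (n : ℝ) ^ 2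
          + 2 * (2 * (n : ℝ) - 1) * (X₀ : ℝ) * ((X₀ : ℝ) - 1) / ((n : ℝ) ^ 2 * ((n : ℝ) - 1)))
        ≤ (1 - 2 * ((n : ℝ) / 2 + A * Real.sqrt n) / n) ^ 2 ∧
      (1 - 2 * ((n : ℝ) / 2 + A * Real.sqrt n) / n) ^ 2 ≤ C * A ^ 2 / n := by
  refine ⟨4, by norm_num, ?_⟩
  intro n hn A hA X₀ hX hd
  set nn : ℝ := (n : ℝ) with hnn
  set x : ℝ := (X₀ : ℝ) with hxx
  have hn2 : (2:ℝ) ≤ nn := by rw [hnn]; exact_mod_cast hn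
  have hnpos : (0:ℝ) < nn := by linarith
  have hn1 : (0:ℝ) < nn - 1 := by linarith
  have hr : Real.sqrt nn ^ 2 = nn := Real.sq_sqrt hnpos.le
  have hx : x ≤ nn := by rw [hxx, hnn]; exact_mod_cast hX
  have hx0 : (0:ℝ) ≤ x := Nat.cast_nonneg _
  have habs : |x - nn / 2| ≤ A * Real.sqrt nn := hd
  have hd2 : (x - nn/2)^2 ≤ A^2 * nn := by
    have h := sq_le_sq' (neg_le_of_abs_le habs) (le_of_abs_le habs)
    calc (x - nn/2)^2 ≤ (A * Real.sqrt nn)^2 := h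
      _ = A^2 * nn := by rw [mul_pow, hr]
  have hRHS : (1 - 2 * (nn / 2 + A * Real.sqrt nn) / nn) ^ 2 = 4 * A^2 / nn := by
    have h1 : 1 - 2 * (nn / 2 + A * Real.sqrt nn) / nn = -(2 * A * Real.sqrt nn) / nn := by
      field_simp
      ring
    rw [h1, div_pow]
    rw [show (-(2 * A * Real.sqrt nn))^2 = 4 * A^2 * Real.sqrt nn ^ 2 by ring, hr]
    field_simp
  constructor
  · rw [hRHS]
    have hrw : (1 - 2 * (2 * nn - 1) * x / nn ^ 2
          + 2 * (2 * nn - 1) * x * (x - 1) / (nn ^ 2 * (nn - 1)))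
        = (nn^2*(nn-1) - 2*(2*nn-1)*x*(nn-1) + 2*(2*nn-1)*x*(x-1)) / (nn^2*(nn-1)) := by
      field_simp
    rw [hrw, div_le_div_iff₀ (by positivity) hnpos]
    have h1 : 4 * (x - nn/2)^2 ≤ nn^2 := by nlinarith
    nlinarith [mul_le_mul_of_nonneg_right hd2 (by positivity : (0:ℝ) ≤ 4*nn*(nn-1)),
      mul_le_mul_of_nonneg_right h1 hn1.le]
  · rw [hRHS]
end
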